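/- Let p, q be coprime positive integers, n ≥ 2, and N = p^n + q^n. The images in (ℤ/Nℤ)^n of the translates of the discrete cubes {0,…,q−1}^n and {0,…,p−1}^{n-1}×{q,…,q+p−1} by the lattice generated by the columns of A (with q on diagonal, -p on subdiagonal, p in entry (1,n)) partition (ℤ/Nℤ)^n; i.e., there is a lattice tiling of (ℤ/Nℤ)^n by discrete hypercubes of side lengths p and q. -/

import Mathlib

/-- The integer matrix `A` with `q` on the diagonal, `-p` on the subdiagonal,
`p` in the top-right corner (entry `(1,n)`), and `0` elsewhere. -/
def tilingMatrixInt (p q : ℕ) (n : ℕ) : Matrix (Fin n) (Fin n) ℤ :=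
  Matrix.of fun i j =>
    if (i : ℕ) = (j : ℕ) then (q : ℤ)
    else if (i : ℕ) = (j : ℕ) + 1 then -(p : ℤ)
    else if (i : ℕ) = 0 ∧ (j : ℕ) = n - 1 then (p : ℤ)
    else 0

/-- The union of the two discrete cubes `{0,…,q-1}^n` and
`{0,…,p-1}^{n-1} × {q,…,q+p-1}`, viewed in `(ℤ/Nℤ)^n`. -/
def discreteTile (p q n N : ℕ) : Set (Fin n → ZMod N) :=
  {c | (∃ m : Fin n → ℕ, (∀ i, m i < q) ∧ c = fun i => (m i : ZMod N)) ∨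
    (∃ m : Fin n → ℕ,
      (∀ i : Fin n, ((i : ℕ) + 1 < n → m i < p) ∧
        ((i : ℕ) + 1 = n → q ≤ m i ∧ m i < q + p)) ∧
      c = fun i => (m i : ZMod N))}

set_option linter.unusedSectionVars false

open Finset AddMonoidAlgebra

namespace DiscreteTiling

variable {N : ℕ}

local notation "R" => AddMonoidAlgebra ℤ (ZMod N)

/-- geometric sum telescope -/
lemma geom_mul (w : ZMod N) (k : ℕ) :
    (∑ m ∈ range k, (single (w * (m : ZMod N)) (1:ℤ) : R)) * (single w 1 - 1) =
      single (w * (k : ZMod N)) 1 - 1 := by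
  induction k with
  | zero => simp [AddMonoidAlgebra.one_def]
  | succ k ih =>
    rw [sum_range_succ, add_mul, ih, mul_sub, single_mul_single, mul_one]
    have : w * (k : ZMod N) + w = w * ((k+1 : ℕ) : ZMod N) := by push_cast; ring
    rw [this]; ring

section Weights

variable (p q n : ℕ) (N : ℕ)

/-- the weight `q^j p^(n-1-j)` in `ZMod N` -/
def wz (j : ℕ) : ZMod N := ((q ^ j * p ^ (n - 1 - j) : ℕ) : ZMod N)

/-- encoding of a digit tuple with digits `< b` -/
def eS {b : ℕ} (m : Fin n → Fin b) : ZMod N :=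
  ∑ j : Fin n, wz p q n N j * ((m j : ℕ) : ZMod N)

/-- encoding of a type-1 digit tuple -/
def e1 (m : Fin n → Fin q) : ZMod N := eS p q n N m

/-- encoding of a type-2 digit tuple -/
def e2 (m : Fin n → Fin p) : ZMod N :=
  wz p q n N (n - 1) * (q : ZMod N) + eS p q n N m

end Weights

section Main

variable (p q n : ℕ)

lemma S_eq_prod (b : ℕ) :
    (∑ m : Fin n → Fin b, (single (eS p q n N m) (1:ℤ) : R)) =
      ∏ j : Fin n, ∑ mj : Fin b,
        (single (wz p q n N (j:ℕ) * ((mj : ℕ) : ZMod N)) (1:ℤ) : R) := by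
  rw [Finset.prod_univ_sum, Fintype.piFinset_univ]
  refine Finset.sum_congr rfl (fun m _ => ?_)
  rw [AddMonoidAlgebra.prod_single, Finset.prod_const_one]
  rfl

lemma factor_mul (w : ZMod N) (k : ℕ) :
    (∑ mj : Fin k, (single (w * ((mj : ℕ) : ZMod N)) (1:ℤ) : R)) * (single w 1 - 1) =
      single (w * (k : ZMod N)) 1 - 1 := by
  rw [Fin.sum_univ_eq_sum_range (fun m => (single (w * ((m : ℕ) : ZMod N)) (1:ℤ) : R)) k]
  exact geom_mul w k

lemma S_mul (b : ℕ) :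
    (∑ m : Fin n → Fin b, (single (eS p q n N m) (1:ℤ) : R)) *
        ∏ j ∈ range n, (single (wz p q n N j) 1 - 1) =
      ∏ j ∈ range n, (single (wz p q n N j * (b : ZMod N)) 1 - 1) := by
  rw [S_eq_prod, ← Fin.prod_univ_eq_prod_range (fun j => (single (wz p q n N j) 1 - 1 : R)) n,
    ← Finset.prod_mul_distrib,
    ← Fin.prod_univ_eq_prod_range (fun j => (single (wz p q n N j * (b:ZMod N)) 1 - 1 : R)) n]
  exact Finset.prod_congr rfl (fun j _ => factor_mul _ b)

end Main

section Key

variable (p q n : ℕ)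

lemma key_identity (hn : 0 < n) (hN : p ^ n + q ^ n = N) :
    ((∑ m : Fin n → Fin q, (single (e1 p q n N m) (1:ℤ) : R))
      + ∑ m : Fin n → Fin p, (single (e2 p q n N m) (1:ℤ) : R)) *
      ∏ j ∈ range n, (single (wz p q n N j) 1 - 1) = 0 := by
  obtain ⟨n', rfl⟩ : ∃ n', n = n' + 1 := ⟨n - 1, (Nat.succ_pred_eq_of_pos hn).symm⟩
  set V : ℕ → ZMod N := fun j => ((q^(j+1) * p^(n'-j) : ℕ) : ZMod N) with hV
  set Qn : ZMod N := ((q^(n'+1) : ℕ) : ZMod N) with hQn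
  set Pn : ZMod N := ((p^(n'+1) : ℕ) : ZMod N) with hPn
  have wq : ∀ j, wz p q (n'+1) N j * (q : ZMod N) = V j := by
    intro j
    unfold wz
    rw [hV, ← Nat.cast_mul, Nat.succ_sub_one]
    congr 1
    ring
  have wqlast : wz p q (n'+1) N n' * (q : ZMod N) = Qn := by
    rw [wq n', hV, hQn]
    norm_num
  have wp : ∀ j, j < n' → wz p q (n'+1) N (j+1) * (p : ZMod N) = V j := by
    intro j hj
    unfold wz
    rw [hV, ← Nat.cast_mul, Nat.succ_sub_one]
    congr 1
    have h2 : n' - j = (n' - (j+1)) + 1 := by omega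
    rw [h2]
    ring
  have wp0 : wz p q (n'+1) N 0 * (p : ZMod N) = Pn := by
    unfold wz
    rw [hPn, ← Nat.cast_mul, Nat.succ_sub_one]
    congr 1
    simp [pow_succ, mul_comm]
  -- S1 side
  have hS1 : (∑ m : Fin (n'+1) → Fin q, (single (e1 p q (n'+1) N m) (1:ℤ) : R)) *
      ∏ j ∈ range (n'+1), (single (wz p q (n'+1) N j) 1 - 1) =
      (∏ j ∈ range n', ((single (V j) 1 : R) - 1)) * (single Qn 1 - 1) := by
    unfold e1
    rw [S_mul p q (n'+1) q]
    rw [prod_range_succ]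
    rw [wqlast]
    congr 1
    exact Finset.prod_congr rfl (fun j hj => by rw [wq j])
  -- S2 side
  have hS2 : (∑ m : Fin (n'+1) → Fin p, (single (e2 p q (n'+1) N m) (1:ℤ) : R)) *
      ∏ j ∈ range (n'+1), (single (wz p q (n'+1) N j) 1 - 1) =
      single Qn 1 * ((∏ j ∈ range n', ((single (V j) 1 : R) - 1)) * (single Pn 1 - 1)) := by
    have hsplit : (∑ m : Fin (n'+1) → Fin p, (single (e2 p q (n'+1) N m) (1:ℤ) : R)) =
        single Qn 1 * ∑ m : Fin (n'+1) → Fin p, (single (eS p q (n'+1) N m) (1:ℤ) : R) := by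
      rw [Finset.mul_sum]
      refine Finset.sum_congr rfl (fun m _ => ?_)
      unfold e2
      rw [Nat.succ_sub_one, single_mul_single, mul_one, wqlast]
    rw [hsplit, mul_assoc, S_mul p q (n'+1) p]
    congr 1
    rw [prod_range_succ']
    rw [wp0]
    congr 1
    exact Finset.prod_congr rfl (fun j hj => by rw [wp j (Finset.mem_range.mp hj)])
  rw [add_mul, hS1, hS2]
  have hzero : ((single Qn 1 : R) - 1) + single Qn 1 * (single Pn 1 - 1) = 0 := by
    rw [mul_sub, mul_one, single_mul_single, mul_one]
    have : Qn + Pn = 0 := by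
      rw [hQn, hPn, ← Nat.cast_add, add_comm, hN, ZMod.natCast_self]
    rw [this]
    rw [AddMonoidAlgebra.one_def]
    ring
  calc (∏ j ∈ range n', ((single (V j) 1 : R) - 1)) * (single Qn 1 - 1) +
        single Qn 1 * ((∏ j ∈ range n', ((single (V j) 1 : R) - 1)) * (single Pn 1 - 1))
      = (∏ j ∈ range n', ((single (V j) 1 : R) - 1)) *
          (((single Qn 1 : R) - 1) + single Qn 1 * (single Pn 1 - 1)) := by ring
    _ = 0 := by rw [hzero, mul_zero]

end Key


section Count

variable [NeZero N]

noncomputable def tot (α : R) : ℤ := ∑ y : ZMod N, α.coeff y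

lemma tot_mul_single (α : R) (w : ZMod N) : tot (α * single w 1) = tot α := by
  unfold tot
  refine Fintype.sum_equiv (Equiv.subRight w) _ _ (fun y => ?_)
  have h2 : (α * single w 1 : R).coeff y = α.coeff (y - w) * 1 := by
    rw [AddMonoidAlgebra.coeff_mul_single_apply, sub_eq_add_neg]
  rw [mul_one] at h2
  rw [h2]
  rfl

lemma tot_single (a : ZMod N) (c : ℤ) : tot (single a c : R) = c := by
  unfold tot
  rw [Finset.sum_eq_single a (fun b _ hb => show (single a c : R).coeff b = 0 by
      rw [AddMonoidAlgebra.coeff_single, Finsupp.single_apply, if_neg (Ne.symm hb)])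
    (by simp)]
  simp

lemma tot_add (a b : R) : tot (a + b) = tot a + tot b := by
  unfold tot
  rw [← Finset.sum_add_distrib]; rfl

lemma tot_sub (a b : R) : tot (a - b) = tot a - tot b := by
  unfold tot
  rw [← Finset.sum_sub_distrib]; rfl

lemma tot_finset_sum {ι : Type*} (s : Finset ι) (f : ι → R) :
    tot (∑ i ∈ s, f i) = ∑ i ∈ s, tot (f i) := by
  unfold tot
  rw [Finset.sum_congr rfl (fun y (_ : y ∈ univ) => by
    rw [AddMonoidAlgebra.coeff_sum, Finset.sum_apply' y]), Finset.sum_comm]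

lemma eq_zero_of_mul_gen (α : R) (w : ZMod N) (hw : IsUnit w)
    (h : α * (single w 1 - 1) = 0) (ht : tot α = 0) : α = 0 := by
  have hmul : α * single w 1 = α := by
    have := h; rwa [mul_sub, mul_one, sub_eq_zero] at this
  have hstep : ∀ y : ZMod N, α.coeff (y - w) = α.coeff y := by
    intro y
    have h2 : (α * single w 1 : R).coeff y = α.coeff (y - w) * 1 := by
      rw [AddMonoidAlgebra.coeff_mul_single_apply, sub_eq_add_neg]
    rw [mul_one] at h2
    rw [← h2, hmul]
  have hstep' : ∀ y : ZMod N, α.coeff (y + w) = α.coeff y := by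
    intro y; have := hstep (y + w); simpa using this.symm
  have hk : ∀ (k : ℕ) (y : ZMod N), α.coeff (y + w * k) = α.coeff y := by
    intro k
    induction k with
    | zero => simp
    | succ k ih =>
      intro y
      have : y + w * ((k:ℕ)+1 : ℕ) = (y + w * k) + w := by push_cast; ring
      rw [this, hstep', ih]
  have hconst : ∀ y : ZMod N, α.coeff y = α.coeff 0 := by
    intro y
    obtain ⟨u, hu⟩ := hw
    have hy : y = 0 + w * ((ZMod.val ((↑u⁻¹ : ZMod N) * y) : ℕ) : ZMod N) := by
      rw [ZMod.natCast_val, ZMod.cast_id, zero_add, ← hu, ← mul_assoc,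
        Units.mul_inv, one_mul]
    rw [hy, hk]
  have htot : tot α = (Fintype.card (ZMod N)) • α.coeff 0 := by
    unfold tot
    have : ∑ y : ZMod N, α.coeff y = ∑ _y : ZMod N, α.coeff 0 :=
      Finset.sum_congr rfl (fun y _ => hconst y)
    rw [this, Finset.sum_const, Finset.card_univ]
  rw [ht] at htot
  have hcard : (Fintype.card (ZMod N) : ℤ) ≠ 0 := by
    simp [ZMod.card, NeZero.ne N]
  have h0 : α.coeff 0 = 0 := by
    have := htot.symm
    rw [nsmul_eq_mul] at this
    rcases mul_eq_zero.mp this with h | h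
    · exact absurd h hcard
    · exact h
  ext y
  rw [hconst y, h0]; rfl

lemma peel (w : ℕ → ZMod N) :
    ∀ (k : ℕ) (α : R), (∀ j, j < k → IsUnit (w j)) →
      α * ∏ j ∈ range k, (single (w j) 1 - 1) = 0 → tot α = 0 → α = 0 := by
  intro k
  induction k with
  | zero => intro α _ h _; simpa using h
  | succ k ih =>
    intro α hw h ht
    rw [prod_range_succ] at h
    have h' : (α * (single (w k) 1 - 1)) * ∏ j ∈ range k, (single (w j) 1 - 1) = 0 := by
      linear_combination h
    have ht' : tot (α * (single (w k) 1 - 1)) = 0 := by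
      rw [mul_sub, mul_one, tot_sub, tot_mul_single, sub_self]
    have hz := ih _ (fun j hj => hw j (Nat.lt_succ_of_lt hj)) h' ht'
    exact eq_zero_of_mul_gen α (w k) (hw k (Nat.lt_succ_self k)) hz ht

lemma coprime_q_N (p q n : ℕ) (hco : Nat.Coprime p q) (hn : 0 < n) :
    Nat.Coprime q (p ^ n + q ^ n) := by
  have h1 : Nat.Coprime q (p ^ n) := (hco.symm).pow_right n
  have h2 : q ^ n = q ^ (n-1) * q := by
    rw [← pow_succ]
    congr 1
    omega
  rw [h2]
  exact (Nat.coprime_add_mul_right_right q (p^n) (q^(n-1))).mpr h1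

lemma coprime_p_N (p q n : ℕ) (hco : Nat.Coprime p q) (hn : 0 < n) :
    Nat.Coprime p (p ^ n + q ^ n) := by
  have := coprime_q_N q p n hco.symm hn
  rwa [add_comm] at this

lemma isUnit_wz (p q n : ℕ) (hco : Nat.Coprime p q) (hn : 0 < n)
    (hN : p ^ n + q ^ n = N) (j : ℕ) : IsUnit (wz p q n N j) := by
  subst hN
  unfold wz
  rw [ZMod.isUnit_iff_coprime]
  exact Nat.Coprime.mul ((coprime_q_N p q n hco hn).pow_left j)
    ((coprime_p_N p q n hco hn).pow_left (n-1-j))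

lemma uniform_mul_single (w : ZMod N) :
    (∑ r : ZMod N, (single r (1:ℤ) : R)) * single w 1 = ∑ r : ZMod N, (single r (1:ℤ) : R) := by
  rw [Finset.sum_mul]
  refine Fintype.sum_equiv (Equiv.addRight w) _ _ (fun r => ?_)
  rw [single_mul_single, mul_one]
  rfl

lemma sum_eq_uniform (p q n : ℕ) (hco : Nat.Coprime p q) (hn : 0 < n)
    (hN : p ^ n + q ^ n = N) :
    ((∑ m : Fin n → Fin q, (single (e1 p q n N m) (1:ℤ) : R))
      + ∑ m : Fin n → Fin p, (single (e2 p q n N m) (1:ℤ) : R)) =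
      ∑ r : ZMod N, (single r (1:ℤ) : R) := by
  set S : R := (∑ m : Fin n → Fin q, (single (e1 p q n N m) (1:ℤ) : R))
      + ∑ m : Fin n → Fin p, (single (e2 p q n N m) (1:ℤ) : R) with hS
  set U : R := ∑ r : ZMod N, (single r (1:ℤ) : R) with hU
  have hU0 : U * ∏ j ∈ range n, (single (wz p q n N j) 1 - 1) = 0 := by
    obtain ⟨n', rfl⟩ : ∃ n', n = n' + 1 := ⟨n - 1, (Nat.succ_pred_eq_of_pos hn).symm⟩
    rw [prod_range_succ']
    have h1 : U * (single (wz p q (n'+1) N 0) 1 - 1) = 0 := by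
      rw [mul_sub, mul_one, uniform_mul_single, sub_self]
    calc U * ((∏ j ∈ range n', (single (wz p q (n'+1) N (j+1)) 1 - 1)) *
          (single (wz p q (n'+1) N 0) 1 - 1))
        = (U * (single (wz p q (n'+1) N 0) 1 - 1)) *
            ∏ j ∈ range n', (single (wz p q (n'+1) N (j+1)) 1 - 1) := by ring
      _ = 0 := by rw [h1, zero_mul]
  have hkey := key_identity p q n hn hN
  have hαmul : (S - U) * ∏ j ∈ range n, (single (wz p q n N j) 1 - 1) = 0 := by
    rw [sub_mul, hS, hkey, hU0, sub_zero]
  have htot : tot (S - U) = 0 := by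
    have hts : tot S = ((q ^ n : ℕ) : ℤ) + ((p ^ n : ℕ) : ℤ) := by
      rw [hS, tot_add, tot_finset_sum, tot_finset_sum]
      simp only [tot_single, Finset.sum_const, Finset.card_univ, nsmul_eq_mul, mul_one]
      rw [Fintype.card_fun, Fintype.card_fun]
      simp [Fintype.card_fin]
    have htu : tot U = (N : ℤ) := by
      rw [hU, tot_finset_sum]
      simp only [tot_single, Finset.sum_const, Finset.card_univ, nsmul_eq_mul, mul_one]
      simp [ZMod.card]
    rw [tot_sub, hts, htu, ← hN]
    push_cast
    ring
  have hunits : ∀ j, j < n → IsUnit (wz p q n N j) :=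
    fun j _ => isUnit_wz p q n hco hn hN j
  have := peel (wz p q n N) n (S - U) hunits hαmul htot
  exact sub_eq_zero.mp this

lemma existsUnique_digit (p q n : ℕ) (hco : Nat.Coprime p q) (hn : 0 < n)
    (hN : p ^ n + q ^ n = N) (r : ZMod N) :
    ∃! d : (Fin n → Fin q) ⊕ (Fin n → Fin p),
      Sum.elim (e1 p q n N) (e2 p q n N) d = r := by
  classical
  have hSU := sum_eq_uniform p q n hco hn hN
  have happ := congrArg (fun f : AddMonoidAlgebra ℤ (ZMod N) => f.coeff r) hSU
  have hL : ((∑ m : Fin n → Fin q, (single (e1 p q n N m) (1:ℤ) : R))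
      + ∑ m : Fin n → Fin p, (single (e2 p q n N m) (1:ℤ) : R)).coeff r
      = ∑ d : (Fin n → Fin q) ⊕ (Fin n → Fin p),
          (if Sum.elim (e1 p q n N) (e2 p q n N) d = r then (1:ℤ) else 0) := by
    rw [Fintype.sum_sum_type]
    rw [show ((∑ m : Fin n → Fin q, (single (e1 p q n N m) (1:ℤ) : R))
      + ∑ m : Fin n → Fin p, (single (e2 p q n N m) (1:ℤ) : R)).coeff r
      = (∑ m : Fin n → Fin q, (single (e1 p q n N m) (1:ℤ) : R)).coeff r
      + (∑ m : Fin n → Fin p, (single (e2 p q n N m) (1:ℤ) : R)).coeff r from rfl]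
    rw [AddMonoidAlgebra.coeff_sum, AddMonoidAlgebra.coeff_sum, Finset.sum_apply', Finset.sum_apply']
    simp only [AddMonoidAlgebra.coeff_single, Finsupp.single_apply, Sum.elim_inl, Sum.elim_inr]
    congr! 1
  have hR : (∑ r' : ZMod N, (single r' (1:ℤ) : R)).coeff r = 1 := by
    rw [AddMonoidAlgebra.coeff_sum, Finset.sum_apply']
    simp [Finsupp.single_apply]
  rw [hL, hR] at happ
  rw [Finset.sum_boole] at happ
  have hcard : (Finset.univ.filter
      (fun d : (Fin n → Fin q) ⊕ (Fin n → Fin p) =>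
        Sum.elim (e1 p q n N) (e2 p q n N) d = r)).card = 1 := by
    exact_mod_cast happ
  obtain ⟨d0, hd0⟩ := Finset.card_eq_one.mp hcard
  refine ⟨d0, ?_, ?_⟩
  · have : d0 ∈ Finset.univ.filter
        (fun d : (Fin n → Fin q) ⊕ (Fin n → Fin p) =>
          Sum.elim (e1 p q n N) (e2 p q n N) d = r) := by
      rw [hd0]; exact Finset.mem_singleton_self d0
    exact (Finset.mem_filter.mp this).2
  · intro d' hd'
    have : d' ∈ Finset.univ.filter
        (fun d : (Fin n → Fin q) ⊕ (Fin n → Fin p) =>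
          Sum.elim (e1 p q n N) (e2 p q n N) d = r) :=
      Finset.mem_filter.mpr ⟨Finset.mem_univ _, hd'⟩
    rw [hd0] at this
    exact Finset.mem_singleton.mp this

end Count

section Phi

variable (p q n : ℕ) (N : ℕ)

/-- the linear functional with weights `q^j p^(n-1-j)` -/
def phi (c : Fin n → ZMod N) : ZMod N := ∑ j : Fin n, wz p q n N (j : ℕ) * c j

lemma phi_sub (x c : Fin n → ZMod N) : phi p q n N (x - c) = phi p q n N x - phi p q n N c := by
  unfold phi
  rw [← Finset.sum_sub_distrib]
  exact Finset.sum_congr rfl (fun j _ => by rw [Pi.sub_apply, mul_sub])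

lemma phi_tile1 (m : Fin n → Fin q) :
    phi p q n N (fun i => ((m i : ℕ) : ZMod N)) = e1 p q n N m := rfl

lemma phi_tile2 (hn : 0 < n) (m : Fin n → Fin p) :
    phi p q n N (fun i => (((if (i:ℕ) + 1 = n then q + (m i : ℕ) else (m i : ℕ)) : ℕ) : ZMod N))
      = e2 p q n N m := by
  unfold phi e2 eS
  have hterm : ∀ j : Fin n,
      wz p q n N (j:ℕ) * (((if (j:ℕ) + 1 = n then q + (m j : ℕ) else (m j : ℕ)) : ℕ) : ZMod N)
        = wz p q n N (j:ℕ) * ((m j : ℕ) : ZMod N)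
          + (if j = (⟨n-1, by omega⟩ : Fin n) then wz p q n N (n-1) * (q : ZMod N) else 0) := by
    intro j
    by_cases h : (j:ℕ) + 1 = n
    · rw [if_pos h, if_pos (Fin.ext (by simp; omega))]
      have hj : (j : ℕ) = n - 1 := by omega
      rw [hj]
      push_cast
      ring
    · rw [if_neg h, if_neg (fun hc => h (by rw [hc]; simp; omega)), add_zero]
  rw [Finset.sum_congr rfl (fun j _ => hterm j), Finset.sum_add_distrib]
  rw [Finset.sum_ite_eq' Finset.univ (⟨n-1, by omega⟩ : Fin n)
    (fun _ => wz p q n N (n-1) * (q : ZMod N))]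
  simp [add_comm]

lemma entry_diag (p q n : ℕ) (i j : Fin n) (h : (i:ℕ) = (j:ℕ)) :
    tilingMatrixInt p q n i j = (q:ℤ) := by
  unfold tilingMatrixInt
  rw [Matrix.of_apply, if_pos h]

lemma entry_sub (p q n : ℕ) (i j : Fin n) (h : (i:ℕ) = (j:ℕ)+1) :
    tilingMatrixInt p q n i j = -(p:ℤ) := by
  unfold tilingMatrixInt
  rw [Matrix.of_apply, if_neg (by omega), if_pos h]

lemma entry_corner (p q n : ℕ) (i j : Fin n) (h1 : (i:ℕ) ≠ (j:ℕ)) (h2 : (i:ℕ) ≠ (j:ℕ)+1)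
    (h3 : (i:ℕ) = 0) (h4 : (j:ℕ) = n - 1) :
    tilingMatrixInt p q n i j = (p:ℤ) := by
  unfold tilingMatrixInt
  rw [Matrix.of_apply, if_neg h1, if_neg h2, if_pos ⟨h3, h4⟩]

lemma entry_zero (p q n : ℕ) (i j : Fin n) (h1 : (i:ℕ) ≠ (j:ℕ)) (h2 : (i:ℕ) ≠ (j:ℕ)+1)
    (h3 : ¬((i:ℕ) = 0 ∧ (j:ℕ) = n - 1)) :
    tilingMatrixInt p q n i j = 0 := by
  unfold tilingMatrixInt
  rw [Matrix.of_apply, if_neg h1, if_neg h2, if_neg h3]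

lemma col_sum (hn : 2 ≤ n) (hN : p ^ n + q ^ n = N) (j : Fin n) :
    ∑ i : Fin n, wz p q n N (i:ℕ) *
      (((tilingMatrixInt p q n).map (Int.cast : ℤ → ZMod N)) i j) = 0 := by
  set f : Fin n → ZMod N := fun i => wz p q n N (i:ℕ) *
      (((tilingMatrixInt p q n).map (Int.cast : ℤ → ZMod N)) i j) with hf
  have hfv : ∀ i : Fin n, f i = wz p q n N (i:ℕ) * ((tilingMatrixInt p q n i j : ℤ) : ZMod N) :=
    fun i => rfl
  by_cases hj : (j:ℕ) + 1 < n
  · set j' : Fin n := ⟨(j:ℕ)+1, hj⟩ with hj'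
    have hval' : (j' : ℕ) = (j:ℕ) + 1 := rfl
    have hne : j ≠ j' := by
      intro h
      have := congrArg Fin.val h
      rw [hval'] at this
      omega
    have h0 : ∀ i ∈ Finset.univ, i ∉ ({j, j'} : Finset (Fin n)) → f i = 0 := by
      intro i _ hi
      simp only [Finset.mem_insert, Finset.mem_singleton] at hi
      push_neg at hi
      have h1 : (i:ℕ) ≠ (j:ℕ) := fun h => hi.1 (Fin.ext h)
      have h2 : (i:ℕ) ≠ (j:ℕ) + 1 := fun h => hi.2 (Fin.ext (by rw [h, hval']))
      have h3 : ¬((i:ℕ) = 0 ∧ (j:ℕ) = n - 1) := by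
        rintro ⟨_, hc⟩
        omega
      rw [hfv, entry_zero p q n i j h1 h2 h3]
      simp
    rw [← Finset.sum_subset (Finset.subset_univ {j, j'}) h0, Finset.sum_pair hne]
    rw [hfv, hfv, entry_diag p q n j j rfl, entry_sub p q n j' j hval']
    push_cast
    have harith : (q:ℕ) ^ (j:ℕ) * p ^ (n-1-(j:ℕ)) * q = q ^ ((j:ℕ)+1) * p ^ (n-1-((j:ℕ)+1)) * p := by
      have h4 : n - 1 - (j:ℕ) = (n - 1 - ((j:ℕ)+1)) + 1 := by omega
      rw [h4]
      ring
    unfold wz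
    have hc : (((q ^ (j:ℕ) * p ^ (n-1-(j:ℕ)) * q : ℕ)) : ZMod N)
        = ((q ^ ((j:ℕ)+1) * p ^ (n-1-((j:ℕ)+1)) * p : ℕ) : ZMod N) := by rw [harith]
    push_cast at hc ⊢
    linear_combination hc
  · have hjl : (j:ℕ) = n - 1 := by have := j.isLt; omega
    set j0 : Fin n := ⟨0, by omega⟩ with hj0
    have hval0 : (j0 : ℕ) = 0 := rfl
    have hne : j ≠ j0 := by
      intro h
      have := congrArg Fin.val h
      rw [hval0] at this
      omega
    have h0 : ∀ i ∈ Finset.univ, i ∉ ({j, j0} : Finset (Fin n)) → f i = 0 := by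
      intro i _ hi
      simp only [Finset.mem_insert, Finset.mem_singleton] at hi
      push_neg at hi
      have h1 : (i:ℕ) ≠ (j:ℕ) := fun h => hi.1 (Fin.ext h)
      have h2 : (i:ℕ) ≠ (j:ℕ) + 1 := by
        have := i.isLt
        omega
      have h3 : ¬((i:ℕ) = 0 ∧ (j:ℕ) = n - 1) := by
        rintro ⟨hc, _⟩
        exact hi.2 (Fin.ext (by rw [hc, hval0]))
      rw [hfv, entry_zero p q n i j h1 h2 h3]
      simp
    rw [← Finset.sum_subset (Finset.subset_univ {j, j0}) h0, Finset.sum_pair hne]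
    have h2' : (j0:ℕ) ≠ (j:ℕ) + 1 := by omega
    have h1' : (j0:ℕ) ≠ (j:ℕ) := by omega
    rw [hfv, hfv, entry_diag p q n j j rfl, entry_corner p q n j0 j h1' h2' hval0 hjl]
    unfold wz
    rw [hval0, hjl]
    push_cast
    have e3 : (q:ZMod N) ^ n = (q:ZMod N) ^ (n-1) * q := by
      rw [← pow_succ]
      congr 1
      omega
    have e4 : (p:ZMod N) ^ n = (p:ZMod N) ^ (n-1) * p := by
      rw [← pow_succ]
      congr 1
      omega
    have hzero : (p:ZMod N) ^ n + (q:ZMod N) ^ n = 0 := by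
      have : (((p ^ n + q ^ n : ℕ)) : ZMod N) = 0 := by rw [hN, ZMod.natCast_self]
      push_cast at this
      exact this
    have h5 : n - 1 - (n - 1) = 0 := by omega
    have h6 : n - 1 - 0 = n - 1 := by omega
    rw [h5, h6, pow_zero, pow_zero]
    calc (q:ZMod N) ^ (n-1) * 1 * q + 1 * (p:ZMod N) ^ (n-1) * p
        = (q:ZMod N) ^ (n-1) * q + (p:ZMod N) ^ (n-1) * p := by ring
      _ = (p:ZMod N) ^ n + (q:ZMod N) ^ n := by rw [← e3, ← e4]; ring
      _ = 0 := hzero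

lemma phi_mulVec (hn : 2 ≤ n) (hN : p ^ n + q ^ n = N) (v : Fin n → ZMod N) :
    phi p q n N (((tilingMatrixInt p q n).map (Int.cast : ℤ → ZMod N)).mulVec v) = 0 := by
  unfold phi
  have hmv : ∀ i : Fin n,
      (((tilingMatrixInt p q n).map (Int.cast : ℤ → ZMod N)).mulVec v) i =
        ∑ j : Fin n, ((tilingMatrixInt p q n).map (Int.cast : ℤ → ZMod N)) i j * v j :=
    fun i => rfl
  calc ∑ i : Fin n, wz p q n N (i:ℕ) *
        ((((tilingMatrixInt p q n).map (Int.cast : ℤ → ZMod N)).mulVec v) i)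
      = ∑ i : Fin n, ∑ j : Fin n, wz p q n N (i:ℕ) *
          (((tilingMatrixInt p q n).map (Int.cast : ℤ → ZMod N)) i j) * v j := by
        refine Finset.sum_congr rfl (fun i _ => ?_)
        rw [hmv i, Finset.mul_sum]
        exact Finset.sum_congr rfl (fun j _ => by ring)
    _ = ∑ j : Fin n, (∑ i : Fin n, wz p q n N (i:ℕ) *
          (((tilingMatrixInt p q n).map (Int.cast : ℤ → ZMod N)) i j)) * v j := by
        rw [Finset.sum_comm]
        exact Finset.sum_congr rfl (fun j _ => by rw [Finset.sum_mul])
    _ = 0 := by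
        rw [Finset.sum_congr rfl (fun j (_ : j ∈ Finset.univ) => by
          rw [col_sum p q n N hn hN j, zero_mul])]
        simp

lemma exists_solution (hn : 2 ≤ n) (hco : Nat.Coprime p q) (hN : p ^ n + q ^ n = N)
    [NeZero N] (y : Fin n → ZMod N) (hy : phi p q n N y = 0) :
    ∃ zf : Fin n → ZMod N,
      ((tilingMatrixInt p q n).map (Int.cast : ℤ → ZMod N)).mulVec zf = y := by
  obtain ⟨m, rfl⟩ : ∃ m, n = m + 1 := ⟨n - 1, by omega⟩
  have hm1 : 1 ≤ m := by omega
  have hcoN : Nat.Coprime q N := by rw [← hN]; exact coprime_q_N p q (m+1) hco (by omega)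
  set uq : (ZMod N)ˣ := ZMod.unitOfCoprime q hcoN with huq
  have hqcast : ((uq : (ZMod N)ˣ) : ZMod N) = (q : ZMod N) := ZMod.coe_unitOfCoprime q hcoN
  have hqu : (q : ZMod N) * ((uq⁻¹ : (ZMod N)ˣ) : ZMod N) = 1 := by
    rw [← hqcast]
    exact_mod_cast uq.mul_inv
  set Y : ℕ → ZMod N := fun k => if h : k < m + 1 then y ⟨k, h⟩ else 0 with hY
  have hYv : ∀ (k : ℕ) (h : k < m + 1), Y k = y ⟨k, h⟩ := fun k h => dif_pos h
  set Z : ℕ → ZMod N :=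
    fun k => Nat.rec 0 (fun j Zj =>
      ((uq⁻¹ : (ZMod N)ˣ) : ZMod N) * (Y (j+1) + (p : ZMod N) * Zj)) k
    with hZdef
  have hZ0 : Z 0 = 0 := rfl
  have hZs : ∀ t, Z (t+1) = ((uq⁻¹ : (ZMod N)ˣ) : ZMod N) * (Y (t+1) + (p : ZMod N) * Z t) :=
    fun t => rfl
  have hZrec : ∀ t, (q : ZMod N) * Z (t+1) = Y (t+1) + (p : ZMod N) * Z t := by
    intro t
    rw [hZs, ← mul_assoc, hqu, one_mul]
  have closed : ∀ k, (q : ZMod N)^k * Z k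
      = ∑ t ∈ Finset.range k, (q : ZMod N)^t * (p : ZMod N)^(k-1-t) * Y (t+1) := by
    intro k
    induction k with
    | zero => simp [hZ0]
    | succ k ih =>
      have step1 : (q : ZMod N)^(k+1) * Z (k+1) = (q:ZMod N)^k * ((q:ZMod N) * Z (k+1)) := by
        ring
      rw [step1, hZrec k, mul_add, Finset.sum_range_succ]
      have step2 : (q:ZMod N)^k * ((p:ZMod N) * Z k) = (p:ZMod N) * ((q:ZMod N)^k * Z k) := by
        ring
      rw [step2, ih, Finset.mul_sum]
      have step3 : ∀ t ∈ Finset.range k,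
          (p:ZMod N) * ((q:ZMod N)^t * (p:ZMod N)^(k-1-t) * Y (t+1))
            = (q:ZMod N)^t * (p:ZMod N)^(k+1-1-t) * Y (t+1) := by
        intro t ht
        have h4 : k + 1 - 1 - t = (k - 1 - t) + 1 := by
          have := Finset.mem_range.mp ht
          omega
        rw [h4]
        ring
      rw [Finset.sum_congr rfl step3]
      have h6 : k + 1 - 1 - k = 0 := by omega
      rw [h6, pow_zero]
      ring
  refine ⟨fun i => Z (i:ℕ), ?_⟩
  funext i
  have hmv : (((tilingMatrixInt p q (m+1)).map (Int.cast : ℤ → ZMod N)).mulVec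
      (fun i => Z (i:ℕ))) i
      = ∑ j : Fin (m+1), ((tilingMatrixInt p q (m+1) i j : ℤ) : ZMod N) * Z (j:ℕ) := rfl
  rw [hmv]
  by_cases hi : (i:ℕ) = 0
  · -- first row
    set jl : Fin (m+1) := ⟨m, by omega⟩ with hjl
    have hjlv : (jl:ℕ) = m := rfl
    have hne : i ≠ jl := by
      intro h
      have := congrArg Fin.val h
      rw [hjlv, hi] at this
      omega
    have h0 : ∀ j ∈ Finset.univ, j ∉ ({i, jl} : Finset (Fin (m+1))) →
        ((tilingMatrixInt p q (m+1) i j : ℤ) : ZMod N) * Z (j:ℕ) = 0 := by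
      intro j _ hj
      simp only [Finset.mem_insert, Finset.mem_singleton] at hj
      push_neg at hj
      have h1 : (i:ℕ) ≠ (j:ℕ) := by
        intro h
        exact hj.1 (Fin.ext h.symm)
      have h2 : (i:ℕ) ≠ (j:ℕ) + 1 := by omega
      have h3 : ¬((i:ℕ) = 0 ∧ (j:ℕ) = (m+1) - 1) := by
        rintro ⟨_, hc⟩
        exact hj.2 (Fin.ext (by rw [hc, hjlv]; omega))
      rw [entry_zero p q (m+1) i j h1 h2 h3]
      simp
    rw [← Finset.sum_subset (Finset.subset_univ {i, jl}) h0, Finset.sum_pair hne]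
    have hd : tilingMatrixInt p q (m+1) i i = (q:ℤ) := entry_diag p q (m+1) i i rfl
    have hc : tilingMatrixInt p q (m+1) i jl = (p:ℤ) :=
      entry_corner p q (m+1) i jl (by rw [hi, hjlv]; omega) (by rw [hi]; omega)
        hi (by rw [hjlv]; omega)
    rw [hd, hc, hi, hZ0, hjlv]
    push_cast
    rw [mul_zero, zero_add]
    -- now goal : (p:ZMod N) * Z m = y i
    have hyi : y i = Y 0 := by
      rw [hYv 0 (by omega)]
      congr 1
      exact Fin.ext hi
    rw [hyi]
    -- the functional hypothesis in range form
    have hphir : ∑ j ∈ Finset.range (m+1),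
        ((q ^ j * p ^ (m - j) : ℕ) : ZMod N) * Y j = 0 := by
      rw [← hy]
      unfold phi wz
      rw [← Fin.sum_univ_eq_sum_range
        (fun j => ((q ^ j * p ^ (m - j) : ℕ) : ZMod N) * Y j) (m+1)]
      refine (Finset.sum_congr rfl (fun j _ => ?_)).symm
      rw [hYv (j:ℕ) j.isLt]
      have h10 : (m + 1 - 1 - (j:ℕ)) = m - (j:ℕ) := by omega
      rw [h10]
    rw [Finset.sum_range_succ'] at hphir
    -- push casts
    have hphir2 : ∑ t ∈ Finset.range m,
          (q:ZMod N)^(t+1) * (p:ZMod N)^(m-t-1) * Y (t+1)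
        + (p:ZMod N)^m * Y 0 = 0 := by
      rw [← hphir]
      congr 1
      · refine Finset.sum_congr rfl (fun t ht => ?_)
        have h7 : m - (t+1) = m - t - 1 := by omega
        push_cast [h7]
        ring
      · push_cast [Nat.sub_zero]
        ring
    have hpq : (p:ZMod N)^(m+1) + (q:ZMod N)^(m+1) = 0 := by
      have h11 : (((p ^ (m+1) + q ^ (m+1) : ℕ)) : ZMod N) = 0 := by
        rw [hN, ZMod.natCast_self]
      push_cast at h11
      exact h11
    have hAB : (p:ZMod N) * (q:ZMod N) *
        (∑ t ∈ Finset.range m, (q:ZMod N)^t * (p:ZMod N)^(m-1-t) * Y (t+1))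
        = (p:ZMod N) * ∑ t ∈ Finset.range m,
            (q:ZMod N)^(t+1) * (p:ZMod N)^(m-t-1) * Y (t+1) := by
      rw [Finset.mul_sum, Finset.mul_sum]
      refine Finset.sum_congr rfl (fun t ht => ?_)
      have h8 : m - 1 - t = m - t - 1 := by omega
      rw [h8]
      ring
    have key : (q:ZMod N)^(m+1) * ((p:ZMod N) * Z m) = (q:ZMod N)^(m+1) * Y 0 := by
      calc (q:ZMod N)^(m+1) * ((p:ZMod N) * Z m)
          = (p:ZMod N) * (q:ZMod N) * ((q:ZMod N)^m * Z m) := by ring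
        _ = (p:ZMod N) * (q:ZMod N) *
              (∑ t ∈ Finset.range m, (q:ZMod N)^t * (p:ZMod N)^(m-1-t) * Y (t+1)) := by
            rw [closed m]
        _ = (p:ZMod N) * ∑ t ∈ Finset.range m,
              (q:ZMod N)^(t+1) * (p:ZMod N)^(m-t-1) * Y (t+1) := hAB
        _ = (p:ZMod N) * ((∑ t ∈ Finset.range m,
              (q:ZMod N)^(t+1) * (p:ZMod N)^(m-t-1) * Y (t+1))
              + (p:ZMod N)^m * Y 0) - (p:ZMod N)^(m+1) * Y 0 := by ring
        _ = (p:ZMod N) * 0 - (p:ZMod N)^(m+1) * Y 0 := by rw [hphir2]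
        _ = (q:ZMod N)^(m+1) * Y 0 := by linear_combination (-(Y 0)) * hpq
    have hunit : (q:ZMod N)^(m+1) = ((uq^(m+1) : (ZMod N)ˣ) : ZMod N) := by
      rw [Units.val_pow_eq_pow_val, hqcast]
    rw [hunit] at key
    exact (Units.mul_right_inj _).mp key
  · -- rows 1..m
    have hi1 : 1 ≤ (i:ℕ) := by omega
    set j2 : Fin (m+1) := ⟨(i:ℕ) - 1, by omega⟩ with hj2
    have hj2v : (j2:ℕ) = (i:ℕ) - 1 := rfl
    have hne : i ≠ j2 := by
      intro h
      have := congrArg Fin.val h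
      rw [hj2v] at this
      omega
    have h0 : ∀ j ∈ Finset.univ, j ∉ ({i, j2} : Finset (Fin (m+1))) →
        ((tilingMatrixInt p q (m+1) i j : ℤ) : ZMod N) * Z (j:ℕ) = 0 := by
      intro j _ hj
      simp only [Finset.mem_insert, Finset.mem_singleton] at hj
      push_neg at hj
      have h1 : (i:ℕ) ≠ (j:ℕ) := by
        intro h
        exact hj.1 (Fin.ext h.symm)
      have h2 : (i:ℕ) ≠ (j:ℕ) + 1 := by
        intro h
        exact hj.2 (Fin.ext (by rw [hj2v]; omega))
      have h3 : ¬((i:ℕ) = 0 ∧ (j:ℕ) = (m+1) - 1) := by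
        rintro ⟨hc, _⟩
        omega
      rw [entry_zero p q (m+1) i j h1 h2 h3]
      simp
    rw [← Finset.sum_subset (Finset.subset_univ {i, j2}) h0, Finset.sum_pair hne]
    have hd : tilingMatrixInt p q (m+1) i i = (q:ℤ) := entry_diag p q (m+1) i i rfl
    have hs : tilingMatrixInt p q (m+1) i j2 = -(p:ℤ) :=
      entry_sub p q (m+1) i j2 (by rw [hj2v]; omega)
    rw [hd, hs, hj2v]
    push_cast
    have hrec := hZrec ((i:ℕ) - 1)
    have h9 : (i:ℕ) - 1 + 1 = (i:ℕ) := by omega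
    rw [h9] at hrec
    have hyi : y i = Y (i:ℕ) := by
      rw [hYv (i:ℕ) i.isLt]
    rw [hyi]
    linear_combination hrec

end Phi

section TileVec

variable (p q n N : ℕ)

/-- the point of `(ZMod N)^n` associated to a digit tuple -/
def tileVec : ((Fin n → Fin q) ⊕ (Fin n → Fin p)) → (Fin n → ZMod N)
  | Sum.inl m => fun i => ((m i : ℕ) : ZMod N)
  | Sum.inr m => fun i =>
      (((if (i:ℕ) + 1 = n then q + (m i : ℕ) else (m i : ℕ)) : ℕ) : ZMod N)

lemma tileVec_mem (d : (Fin n → Fin q) ⊕ (Fin n → Fin p)) :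
    tileVec p q n N d ∈ discreteTile p q n N := by
  cases d with
  | inl m =>
    exact Or.inl ⟨fun i => (m i : ℕ), fun i => (m i).isLt, rfl⟩
  | inr m =>
    refine Or.inr ⟨fun i => if (i:ℕ) + 1 = n then q + (m i : ℕ) else (m i : ℕ),
      fun i => ⟨?_, ?_⟩, rfl⟩
    · intro h1
      show (if (i:ℕ) + 1 = n then q + (m i : ℕ) else (m i : ℕ)) < p
      rw [if_neg (by omega)]
      exact (m i).isLt
    · intro h2
      show q ≤ (if (i:ℕ) + 1 = n then q + (m i : ℕ) else (m i : ℕ)) ∧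
        (if (i:ℕ) + 1 = n then q + (m i : ℕ) else (m i : ℕ)) < q + p
      rw [if_pos h2]
      have := (m i).isLt
      omega

lemma phi_tileVec (hn : 0 < n) (d : (Fin n → Fin q) ⊕ (Fin n → Fin p)) :
    phi p q n N (tileVec p q n N d) = Sum.elim (e1 p q n N) (e2 p q n N) d := by
  cases d with
  | inl m => exact phi_tile1 p q n N m
  | inr m => exact phi_tile2 p q n N hn m

lemma tile_repr (c : Fin n → ZMod N) (hc : c ∈ discreteTile p q n N) :
    ∃ d : (Fin n → Fin q) ⊕ (Fin n → Fin p), tileVec p q n N d = c := by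
  rcases hc with ⟨m', hb, rfl⟩ | ⟨m', hb, rfl⟩
  · exact ⟨Sum.inl (fun i => ⟨m' i, hb i⟩), rfl⟩
  · refine ⟨Sum.inr (fun i =>
      (⟨if (i:ℕ) + 1 = n then m' i - q else m' i, by
        by_cases h : (i:ℕ) + 1 = n
        · rw [if_pos h]
          have := (hb i).2 h
          omega
        · rw [if_neg h]
          have h2 := i.isLt
          exact (hb i).1 (by omega)⟩ : Fin p)), ?_⟩
    funext i
    show (((if (i:ℕ) + 1 = n then q + (if (i:ℕ) + 1 = n then m' i - q else m' i)
        else (if (i:ℕ) + 1 = n then m' i - q else m' i)) : ℕ) : ZMod N)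
      = ((m' i : ℕ) : ZMod N)
    by_cases h : (i:ℕ) + 1 = n
    · rw [if_pos h, if_pos h]
      congr 1
      have := (hb i).2 h
      omega
    · rw [if_neg h, if_neg h]

end TileVec

end DiscreteTiling


/-- For coprime positive integers `p, q` and `N = pⁿ + qⁿ`, the translates of the two
discrete cubes by the image of the lattice `A·ℤⁿ` partition `(ℤ/Nℤ)ⁿ`: every point has
a unique representation as a lattice point plus a point of the discrete tile. -/
theorem discrete_lattice_tiling (p q : ℕ) (hp : 0 < p) (hq : 0 < q) (hco : Nat.Coprime p q)
    (n : ℕ) (hn : 2 ≤ n) (x : Fin n → ZMod (p ^ n + q ^ n)) :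
    ∃! c : Fin n → ZMod (p ^ n + q ^ n),
      c ∈ discreteTile p q n (p ^ n + q ^ n) ∧
      ∃ z : Fin n → ℤ,
        x - c = ((tilingMatrixInt p q n).map (Int.cast : ℤ → ZMod (p ^ n + q ^ n))).mulVec
          fun i => ((z i : ℤ) : ZMod (p ^ n + q ^ n)) := by
  haveI : NeZero (p ^ n + q ^ n) := NeZero.of_pos (by positivity)
  have hn0 : 0 < n := by omega
  obtain ⟨d0, hd0enc, hd0u⟩ :=
    DiscreteTiling.existsUnique_digit p q n hco hn0 rfl
      (DiscreteTiling.phi p q n (p ^ n + q ^ n) x)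
  refine ⟨DiscreteTiling.tileVec p q n (p ^ n + q ^ n) d0,
    ⟨DiscreteTiling.tileVec_mem p q n (p ^ n + q ^ n) d0, ?_⟩, ?_⟩
  · have h1 : DiscreteTiling.phi p q n (p ^ n + q ^ n)
        (x - DiscreteTiling.tileVec p q n (p ^ n + q ^ n) d0) = 0 := by
      rw [DiscreteTiling.phi_sub, DiscreteTiling.phi_tileVec p q n (p ^ n + q ^ n) hn0 d0,
        hd0enc, sub_self]
    obtain ⟨zf, hzf⟩ :=
      DiscreteTiling.exists_solution p q n (p ^ n + q ^ n) hn hco rfl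
        (x - DiscreteTiling.tileVec p q n (p ^ n + q ^ n) d0) h1
    refine ⟨fun i => ((zf i).val : ℤ), ?_⟩
    have hvec : (fun i : Fin n => (((zf i).val : ℤ) : ZMod (p ^ n + q ^ n))) = zf := by
      funext i
      push_cast
      exact ZMod.natCast_rightInverse (zf i)
    rw [hvec]
    exact hzf.symm
  · rintro c' ⟨hc'mem, z', hz'⟩
    obtain ⟨d', hd'⟩ := DiscreteTiling.tile_repr p q n (p ^ n + q ^ n) c' hc'mem
    have h2 : DiscreteTiling.phi p q n (p ^ n + q ^ n) (x - c') = 0 := by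
      rw [hz']
      exact DiscreteTiling.phi_mulVec p q n (p ^ n + q ^ n) hn rfl _
    rw [DiscreteTiling.phi_sub] at h2
    have hphic' : DiscreteTiling.phi p q n (p ^ n + q ^ n) c'
        = DiscreteTiling.phi p q n (p ^ n + q ^ n) x := (sub_eq_zero.mp h2).symm
    have henc' : Sum.elim (DiscreteTiling.e1 p q n (p ^ n + q ^ n))
        (DiscreteTiling.e2 p q n (p ^ n + q ^ n)) d'
        = DiscreteTiling.phi p q n (p ^ n + q ^ n) x := by
      rw [← DiscreteTiling.phi_tileVec p q n (p ^ n + q ^ n) hn0 d', hd', hphic']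
    have hd0' : d' = d0 := hd0u d' henc'
    rw [← hd', hd0']
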